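/- Let S be a set and π an equivalence relation on S which has two distinct non-singleton classes. Then π is not an upper-modular element of the lattice of equivalence relations on S: there exist equivalence relations ρ, σ with ρ ≤ π and π ∧ (σ ∨ ρ) ≠ (π ∧ σ) ∨ ρ. -/

import Mathlib

/-- Setoid whose only nontrivial class is `{a, b}`. -/
def pairSetoid {S : Type*} (a b : S) : Setoid S where
  r x y := x = y ∨ (x = a ∧ y = b) ∨ (x = b ∧ y = a)
  iseqv := by
    constructor
    · intro x; tauto
    · intro x y h; tauto
    · rintro x y z h1 h2
      rcases h1 with rfl | ⟨rfl, rfl⟩ | ⟨rfl, rfl⟩ <;>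
        rcases h2 with h | ⟨h, rfl⟩ | ⟨h, rfl⟩ <;> subst_vars <;> tauto

/-- Setoid whose nontrivial classes are `{a, c}` and `{b, d}` (which must be disjoint). -/
def twoPairSetoid {S : Type*} (a c b d : S) (hab : a ≠ b) (had : a ≠ d)
    (hcb : c ≠ b) (hcd : c ≠ d) : Setoid S where
  r x y := x = y ∨ (x = a ∧ y = c) ∨ (x = c ∧ y = a) ∨ (x = b ∧ y = d) ∨ (x = d ∧ y = b)
  iseqv := by
    constructor
    · intro x; tauto
    · intro x y h; tauto
    · rintro x y z h1 h2
      rcases h1 with rfl | ⟨rfl, rfl⟩ | ⟨rfl, rfl⟩ | ⟨rfl, rfl⟩ | ⟨rfl, rfl⟩ <;>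
        rcases h2 with h | ⟨h, rfl⟩ | ⟨h, rfl⟩ | ⟨h, rfl⟩ | ⟨h, rfl⟩ <;> subst_vars <;>
          first
            | tauto
            | (exact absurd rfl hab)
            | (exact absurd rfl had)
            | (exact absurd rfl hcb)
            | (exact absurd rfl hcd)

theorem stmt_4 {S : Type*} (π : Setoid S)
    (h : ∃ a b c d : S, π.r a b ∧ a ≠ b ∧ π.r c d ∧ c ≠ d ∧ ¬ π.r a c) :
    ∃ ρ σ : Setoid S, ρ ≤ π ∧ π ⊓ (σ ⊔ ρ) ≠ (π ⊓ σ) ⊔ ρ := by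
  obtain ⟨a, b, c, d, hab, hneab, hcd, hnecd, hnac⟩ := h
  -- derived distinctness
  have hnad : a ≠ d := by rintro rfl; exact hnac (π.symm hcd)
  have hncb : c ≠ b := by rintro rfl; exact hnac hab
  have hnca : c ≠ a := by rintro rfl; exact hnac (π.refl _)
  have hndb : d ≠ b := by rintro rfl; exact hnac (π.trans hab (π.symm hcd))
  have hnda : d ≠ a := by rintro rfl; exact hnac (π.symm hcd)
  set ρ := pairSetoid a b with hρ
  set σ := twoPairSetoid a c b d hneab hnad hncb hnecd with hσ
  refine ⟨ρ, σ, ?_, ?_⟩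
  · -- ρ ≤ π
    rw [Setoid.le_def]
    rintro x y (rfl | ⟨rfl, rfl⟩ | ⟨rfl, rfl⟩)
    · exact π.refl x
    · first | exact hab | exact π.symm hab
    · first | exact hab | exact π.symm hab
  · -- the inequality
    intro heq
    -- LHS relates c and d
    have hσca : σ c a := by right; right; left; exact ⟨rfl, rfl⟩
    have hρab : ρ a b := by right; left; exact ⟨rfl, rfl⟩
    have hσbd : σ b d := by right; right; right; left; exact ⟨rfl, rfl⟩
    have hsub1 : σ ≤ σ ⊔ ρ := le_sup_left
    have hsub2 : ρ ≤ σ ⊔ ρ := le_sup_right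
    have hL : (π ⊓ (σ ⊔ ρ)) c d := by
      exact ⟨hcd, (σ ⊔ ρ).trans (hsub1 hσca) ((σ ⊔ ρ).trans (hsub2 hρab) (hsub1 hσbd))⟩
    -- RHS does not relate c and d
    have hle : (π ⊓ σ) ⊔ ρ ≤ ρ := by
      refine sup_le ?_ le_rfl
      rw [Setoid.le_def]
      intro x y hxy
      obtain ⟨hπxy, hσxy⟩ := Setoid.inf_iff_and.mp hxy
      rcases hσxy with rfl | ⟨rfl, rfl⟩ | ⟨rfl, rfl⟩ | ⟨rfl, rfl⟩ | ⟨rfl, rfl⟩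
      · exact ρ.refl x
      · exact absurd hπxy hnac
      · exact absurd (π.symm hπxy) hnac
      · exact absurd (π.trans hab hπxy) (fun h => hnac (π.trans h (π.symm hcd)))
      · exact absurd (π.trans hab (π.symm hπxy)) (fun h => hnac (π.trans h (π.symm hcd)))
    rw [heq] at hL
    have hR : ρ c d := hle hL
    rcases hR with h' | ⟨h1, h2⟩ | ⟨h1, h2⟩
    · exact hnecd h'
    · exact hnca h1
    · exact hncb h1
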